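/- Let (a_n) be a regular sequence in the Hahn field 𝓕 with limsup_{n→∞}(−λ(a_n)/n) = 0, let S = ∪_n supp(a_n), and let r = 1 / sup{limsup_{n→∞} |a_n[q]|^{1/n} : q ∈ S}. Then for x ∈ 𝓕 with λ(x) ≥ 0, the power series Σ_{n=0}^∞ a_n x^n converges absolutely in (𝓕, τ_w) if |x[0]| < r, and diverges in (𝓕, τ_w) if |x[0]| > r. -/

import Mathlib

open scoped Classical

/-- The Hahn field `𝓕` of maps `ℚ → ℝ` with well-ordered support. -/
noncomputable abbrev F := HahnSeries ℚ ℝ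

/-- A subset `A` of `ℚ` is well-bounded if every nonempty subset of `A`
has a maximum element. -/
def WellBoundedSet (A : Set ℚ) : Prop :=
  ∀ S ⊆ A, S.Nonempty → ∃ m ∈ S, ∀ a ∈ S, a ≤ m

/-- A well-bounded partition of `ℚ`: a countable family of mutually disjoint
well-bounded sets whose union is all of `ℚ`. -/
def IsWBPartition (γ : ℕ → Set ℚ) : Prop :=
  Pairwise (Function.onFun Disjoint γ) ∧ (∀ i, WellBoundedSet (γ i)) ∧
    (⋃ i, γ i) = Set.univ

/-- A finite well-bounded partition of `ℚ`: each piece is moreover finite. -/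
def IsFinWBPartition (γ : ℕ → Set ℚ) : Prop :=
  IsWBPartition γ ∧ ∀ i, (γ i).Finite

/-- `Γ_n`, the union of the first `n` pieces of the partition. -/
def Gam (γ : ℕ → Set ℚ) (n : ℕ) : Set ℚ := ⋃ i < n, γ i

/-- The semi-norm `‖x‖_{Γ,n} = max {|x[q]| : q ∈ Γ_n}` induced by a well-bounded
partition `Γ` of `ℚ` (realized as a supremum together with `0`). -/
noncomputable def gnorm (γ : ℕ → Set ℚ) (n : ℕ) (x : F) : ℝ :=
  sSup (insert 0 ((fun q => |x.coeff q|) '' Gam γ n))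

/-- `μ(r) = ⌈1/r⌉`. -/
noncomputable def mu (r : ℝ) : ℕ := ⌈1 / r⌉₊

/-- The pseudo-ball `B_Γ(x, r) = {y | ‖x − y‖_{Γ,μ(r)} < r}`. -/
def PB (γ : ℕ → Set ℚ) (x : F) (r : ℝ) : Set F :=
  {y : F | gnorm γ (mu r) (x - y) < r}

/-- The topology `τ_Γ` induced by the semi-norms of the partition `Γ`, as the
collection of its open sets. -/
def Top' (γ : ℕ → Set ℚ) : Set (Set F) :=
  {O : Set F | ∀ x ∈ O, ∃ r : ℝ, 0 < r ∧ PB γ x r ⊆ O}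

/-- A subset `A` of `ℚ` is well-ordered if every nonempty subset of `A`
has a minimum element. -/
def WellOrderedSet (A : Set ℚ) : Prop :=
  ∀ S ⊆ A, S.Nonempty → ∃ m ∈ S, ∀ a ∈ S, m ≤ a

/-- Convergence of a sequence in `𝓕` in the weak topology `τ_w` (induced by a
finite well-bounded partition `γ`). -/
def WeakConvTo (γ : ℕ → Set ℚ) (s : ℕ → F) (l : F) : Prop :=
  ∀ ε : ℝ, 0 < ε → ∃ N : ℕ, ∀ n ≥ N, gnorm γ (mu ε) (s n - l) < ε

/-- `x` is positive in the ordered Hahn field: `x ≠ 0` and `x[λ(x)] > 0`. -/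
noncomputable def FPos (x : F) : Prop := x ≠ 0 ∧ 0 < x.coeff x.order

/-- The order `x ≤ y` on the Hahn field. -/
noncomputable def FLe (x y : F) : Prop := x = y ∨ FPos (y - x)

/-- The absolute value on the ordered Hahn field. -/
noncomputable def Fabs (x : F) : F := if FLe 0 x then x else -x

open Filter Topology
open scoped Pointwise

section Aux

/-- coefficient at `q` as an additive hom -/
noncomputable def coeffHom (q : ℚ) : F →+ ℝ where
  toFun z := z.coeff q
  map_zero' := HahnSeries.coeff_zero
  map_add' _ _ := HahnSeries.coeff_add

lemma sum_coeff (s : Finset ℕ) (f : ℕ → F) (q : ℚ) :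
    (∑ n ∈ s, f n).coeff q = ∑ n ∈ s, (f n).coeff q :=
  map_sum (coeffHom q) f s

lemma wellOrdered_induction {A : Set ℚ} (hA0 : WellOrderedSet A) (P : ℚ → Prop)
    (ih : ∀ s ∈ A, (∀ s' ∈ A, s' < s → P s') → P s) : ∀ s ∈ A, P s := by
  have hA : ∀ S ⊆ A, S.Nonempty → ∃ m ∈ S, ∀ a ∈ S, m ≤ a := hA0
  by_contra hcon
  push_neg at hcon
  obtain ⟨s0, hs0A, hs0⟩ := hcon
  obtain ⟨m, hmB, hmin⟩ := hA {s | s ∈ A ∧ ¬ P s} (fun s hs => hs.1) ⟨s0, hs0A, hs0⟩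
  exact hmB.2 (ih m hmB.1 fun s' hs' hlt => by
    by_contra hP
    exact absurd (hmin s' ⟨hs', hP⟩) (not_le.2 hlt))

lemma isWF_of_wellOrdered {A : Set ℚ} (hA0 : WellOrderedSet A) : A.IsWF := by
  have hA : ∀ S ⊆ A, S.Nonempty → ∃ m ∈ S, ∀ a ∈ S, m ≤ a := hA0
  rw [Set.isWF_iff_no_descending_seq]
  rintro f hf hmem
  obtain ⟨m, hm, hmin⟩ := hA (Set.range f) (by rintro q ⟨n, rfl⟩; exact hmem n)
    ⟨f 0, Set.mem_range_self 0⟩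
  obtain ⟨n, rfl⟩ := hm
  exact absurd (hmin (f (n+1)) (Set.mem_range_self _)) (not_le.2 (hf (Nat.lt_succ_self n)))

lemma supp_pow_nonneg {x : F} (hx : ∀ q ∈ x.support, 0 ≤ q) :
    ∀ n : ℕ, ∀ q ∈ (x ^ n).support, 0 ≤ q := by
  intro n
  induction n with
  | zero =>
    intro q hq
    rw [pow_zero] at hq
    have := HahnSeries.support_single_subset hq
    simp only [Set.mem_singleton_iff] at this
    simp [this]
  | succ n ih =>
    intro q hq
    rw [pow_succ] at hq
    obtain ⟨u, hu, v, hv, rfl⟩ := HahnSeries.support_mul_subset hq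
    exact add_nonneg (ih u hu) (hx v hv)

lemma supp_pow_subset_closure (x : F) (n : ℕ) :
    (x ^ n).support ⊆ (AddSubmonoid.closure x.support : Set ℚ) := by
  induction n with
  | zero =>
    intro q hq
    rw [pow_zero] at hq
    have := HahnSeries.support_single_subset hq
    simp only [Set.mem_singleton_iff] at this
    rw [this]; exact AddSubmonoid.zero_mem _
  | succ n ih =>
    intro q hq
    rw [pow_succ] at hq
    obtain ⟨u, hu, v, hv, rfl⟩ := HahnSeries.support_mul_subset hq
    exact AddSubmonoid.add_mem _ (ih hu) (AddSubmonoid.subset_closure hv)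

lemma mul_coeff_fixed {S T : Set ℚ} (hS : S.IsPWO) (hT : T.IsPWO) {aa xx : F}
    (ha : aa.support ⊆ S) (hxs : xx.support ⊆ T) (q : ℚ) :
    (aa * xx).coeff q =
      ∑ p ∈ Finset.antidiagonal hS hT q, aa.coeff p.1 * xx.coeff p.2 := by
  rw [HahnSeries.coeff_mul_left' hS ha]
  refine Finset.sum_subset (Finset.antidiagonal_mono_right hxs) ?_
  intro p hp hnp
  rw [Finset.mem_antidiagonal] at hp hnp
  have : xx.coeff p.2 = 0 := by
    by_contra h
    exact hnp ⟨hp.1, h, hp.2.2⟩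
  simp [this]

lemma mul_coeff_zero_of_nonneg {aa xx : F} (ha : ∀ q ∈ aa.support, 0 ≤ q)
    (hxs : ∀ q ∈ xx.support, 0 ≤ q) :
    (aa * xx).coeff 0 = aa.coeff 0 * xx.coeff 0 := by
  rw [HahnSeries.coeff_mul]
  have hsub : Finset.antidiagonal aa.isPWO_support xx.isPWO_support 0 ⊆ {((0:ℚ),(0:ℚ))} := by
    intro p hp
    rw [Finset.mem_antidiagonal] at hp
    have h1 := ha p.1 hp.1
    have h2 := hxs p.2 hp.2.1
    have hp1 : p.1 = 0 := le_antisymm (by linarith [hp.2.2]) h1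
    have hp2 : p.2 = 0 := le_antisymm (by linarith [hp.2.2]) h2
    simp [Finset.mem_singleton, Prod.ext_iff, hp1, hp2]
  rw [Finset.sum_subset hsub ?_]
  · simp
  · intro p hp hnp
    simp only [Finset.mem_singleton] at hp
    subst hp
    rw [Finset.mem_antidiagonal] at hnp
    simp only [HahnSeries.mem_support, add_zero, and_true, not_and, not_not] at hnp
    by_cases h0 : aa.coeff 0 = 0
    · simp [h0]
    · simp [hnp h0]

lemma pow_coeff_zero {x : F} (hx : ∀ q ∈ x.support, 0 ≤ q) (n : ℕ) :
    (x ^ n).coeff 0 = (x.coeff 0) ^ n := by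
  induction n with
  | zero => simp [HahnSeries.coeff_one]
  | succ n ih =>
    rw [pow_succ, pow_succ, mul_coeff_zero_of_nonneg (supp_pow_nonneg hx n) hx, ih]

lemma gamFinite {γ : ℕ → Set ℚ} (hγ : IsFinWBPartition γ) (n : ℕ) : (Gam γ n).Finite :=
  Set.Finite.biUnion (Set.finite_Iio n) fun i _ => hγ.2 i

lemma gnorm_lt {γ : ℕ → Set ℚ} (hγ : IsFinWBPartition γ) {ε : ℝ} (hε : 0 < ε) (z : F) (n : ℕ)
    (h : ∀ q ∈ Gam γ n, |z.coeff q| < ε) : gnorm γ n z < ε := by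
  have hfin : ((insert 0 ((fun q => |z.coeff q|) '' Gam γ n)) : Set ℝ).Finite :=
    ((gamFinite hγ n).image _).insert 0
  have hne : ((insert 0 ((fun q => |z.coeff q|) '' Gam γ n)) : Set ℝ).Nonempty :=
    ⟨0, Set.mem_insert _ _⟩
  have := hne.csSup_mem hfin
  rcases this with h0 | hmem
  · rw [gnorm, h0]; exact hε
  · obtain ⟨q, hq, hqe⟩ := hmem
    rw [gnorm, ← hqe]
    exact h q hq

lemma coeff_le_gnorm {γ : ℕ → Set ℚ} (hγ : IsFinWBPartition γ) (n : ℕ) (z : F) {q : ℚ}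
    (hq : q ∈ Gam γ n) : |z.coeff q| ≤ gnorm γ n z := by
  refine le_csSup (Set.Finite.bddAbove (((gamFinite hγ n).image _).insert 0)) ?_
  exact Set.mem_insert_of_mem _ ⟨q, hq, rfl⟩

lemma weakConv_of_summable {γ : ℕ → Set ℚ} (hγ : IsFinWBPartition γ) (z : ℕ → F)
    {W : Set ℚ} (hW : W.IsPWO) (hsupp : ∀ n, (z n).support ⊆ W)
    (hsum : ∀ q : ℚ, Summable fun n => (z n).coeff q) :
    ∃ l : F, WeakConvTo γ (fun m => ∑ n ∈ Finset.range (m + 1), z n) l := by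
  set l : F := ⟨fun q => ∑' n, (z n).coeff q, hW.mono (by
    intro q hq
    by_contra hqW
    apply hq
    have hz : ∀ n, (z n).coeff q = 0 := fun n => by
      by_contra h; exact hqW (hsupp n h)
    simp only [Function.mem_support, ne_eq, not_not] at *
    simp [hz])⟩ with hl
  refine ⟨l, ?_⟩
  intro ε hε
  have hG : (Gam γ (mu ε)).Finite := gamFinite hγ (mu ε)
  have key : ∀ q : ℚ, ∀ᶠ m in atTop,
      |(∑ n ∈ Finset.range (m + 1), z n).coeff q - l.coeff q| < ε := by
    intro q
    have ht : Tendsto (fun m => ∑ n ∈ Finset.range (m + 1), (z n).coeff q) atTop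
        (𝓝 (∑' n, (z n).coeff q)) :=
      ((hsum q).hasSum.tendsto_sum_nat).comp (tendsto_add_atTop_nat 1)
    have := Metric.tendsto_atTop.mp ht ε hε
    obtain ⟨N, hN⟩ := this
    rw [eventually_atTop]
    exact ⟨N, fun m hm => by
      have := hN m hm
      rw [Real.dist_eq] at this
      simpa [sum_coeff, hl] using this⟩
  have := (hG.eventually_all).2 fun q _ => key q
  rw [eventually_atTop] at this
  obtain ⟨N, hN⟩ := this
  exact ⟨N, fun m hm => gnorm_lt hγ hε _ _ fun q hq => (hN m hm) q hq⟩

lemma coeff_tendsto_of_weakConv {γ : ℕ → Set ℚ} (hγ : IsFinWBPartition γ) {s : ℕ → F} {l : F}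
    (h : WeakConvTo γ s l) (hU : (⋃ i, γ i) = Set.univ) (q : ℚ) :
    Tendsto (fun m => (s m).coeff q) atTop (𝓝 (l.coeff q)) := by
  rw [Metric.tendsto_atTop]
  intro ε hε
  have hqU : q ∈ ⋃ i, γ i := hU ▸ Set.mem_univ q
  obtain ⟨i, hi⟩ := Set.mem_iUnion.mp hqU
  set ε' : ℝ := min ε (1 / (i + 1)) with hε'def
  have hε' : 0 < ε' := lt_min hε (by positivity)
  obtain ⟨N, hN⟩ := h ε' hε'
  refine ⟨N, fun m hm => ?_⟩
  have hqG : q ∈ Gam γ (mu ε') := by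
    have h1 : ((i : ℝ) + 1) ≤ 1 / ε' := by
      rw [le_div_iff₀ hε']
      calc ((i:ℝ) + 1) * ε' ≤ ((i:ℝ)+1) * (1/(i+1)) := by
            apply mul_le_mul_of_nonneg_left (min_le_right _ _) (by positivity)
        _ = 1 := by field_simp
    have h2 : i + 1 ≤ mu ε' := by
      rw [mu]
      by_contra hcon
      push_neg at hcon
      have : (⌈1/ε'⌉₊ : ℝ) < (i:ℝ) + 1 := by exact_mod_cast hcon
      have h3 : (1:ℝ)/ε' ≤ ⌈1/ε'⌉₊ := Nat.le_ceil _
      linarith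
    exact Set.mem_biUnion (lt_of_lt_of_le (Nat.lt_succ_self i) h2) hi
  have := (coeff_le_gnorm hγ (mu ε') (s m - l) hqG).trans_lt (hN m hm)
  rw [HahnSeries.coeff_sub] at this
  rw [Real.dist_eq]
  exact this.trans_le (min_le_left _ _)

lemma pow_coeff_bound (x : F) (hx0 : ∀ q ∈ x.support, 0 ≤ q) (u : ℚ) :
    ∃ (C : ℝ) (K : ℕ), 0 ≤ C ∧ ∀ n : ℕ, K + 1 ≤ n →
      |(x ^ n).coeff u| ≤ C * (n : ℝ) ^ K * |x.coeff 0| ^ n := by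
  set c := x.coeff 0 with hc
  set y : F := x - HahnSeries.single 0 c with hydef
  have hy0 : ∀ q ∈ y.support, 0 < q := by
    intro q hq
    have hqne : y.coeff q ≠ 0 := hq
    by_cases h0 : q = 0
    · exfalso; apply hqne
      rw [h0, hydef, HahnSeries.coeff_sub, HahnSeries.coeff_single_same, sub_self]
    · have : y.coeff q = x.coeff q := by
        rw [hydef, HahnSeries.coeff_sub, HahnSeries.coeff_single_of_ne h0, sub_zero]
      rw [this] at hqne
      exact lt_of_le_of_ne (hx0 q hqne) (Ne.symm h0)
  obtain ⟨K, hK⟩ : ∃ K : ℕ, ∀ k : ℕ, K < k → (y ^ k).coeff u = 0 := by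
    by_cases hy : y = 0
    · exact ⟨0, fun k hk => by rw [hy, zero_pow (by omega), HahnSeries.coeff_zero]⟩
    · set d := y.order with hdd
      have hd : 0 < d := hy0 _ (HahnSeries.coeff_order_eq_zero.not.mpr hy)
      have claim : ∀ k : ℕ, ∀ v ∈ (y ^ k).support, (k : ℚ) * d ≤ v := by
        intro k
        induction k with
        | zero =>
          intro v hv
          rw [pow_zero] at hv
          have := HahnSeries.support_single_subset hv
          simp only [Set.mem_singleton_iff] at this
          simp [this]
        | succ k ih =>
          intro v hv
          rw [pow_succ] at hv
          obtain ⟨p, hp, q, hq, rfl⟩ := HahnSeries.support_mul_subset hv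
          have h1 := ih p hp
          have h2 : d ≤ q := HahnSeries.order_le_of_coeff_ne_zero hq
          push_cast
          linarith
      refine ⟨⌈u / d⌉₊, fun k hk => ?_⟩
      by_contra hne
      have h1 : (k : ℚ) * d ≤ u := claim k u hne
      have h2 : (k : ℚ) ≤ u / d := (le_div_iff₀ hd).mpr h1
      have h3 : (k : ℚ) ≤ ⌈u / d⌉₊ := h2.trans (Nat.le_ceil _)
      exact absurd (Nat.cast_le.mp h3) (not_le.2 hk)
  have hxy : x = HahnSeries.single 0 c + y := by rw [hydef]; ring
  have hcoeff : ∀ n : ℕ, (x ^ n).coeff u =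
      ∑ k ∈ Finset.range (n + 1), (n.choose k : ℝ) * (c ^ k * (y ^ (n - k)).coeff u) := by
    intro n
    have expand : x ^ n = ∑ k ∈ Finset.range (n + 1),
        n.choose k • (HahnSeries.single 0 (c ^ k) * y ^ (n - k)) := by
      conv_lhs => rw [hxy]
      rw [(Commute.all (HahnSeries.single 0 c) y).add_pow]
      refine Finset.sum_congr rfl fun k _ => ?_
      simp only [HahnSeries.single_pow, smul_zero, nsmul_eq_mul]
      ring
    rw [expand, sum_coeff]
    refine Finset.sum_congr rfl fun k _ => ?_
    have h1 : (n.choose k • (HahnSeries.single 0 (c ^ k) * y ^ (n - k))).coeff u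
        = (n.choose k : ℝ) * ((HahnSeries.single 0 (c ^ k) * y ^ (n - k)).coeff u) := by
      rw [show ∀ z : F, z.coeff u = coeffHom u z from fun _ => rfl, map_nsmul, nsmul_eq_mul]
      rfl
    rw [h1, HahnSeries.coeff_single_zero_mul]
  refine ⟨∑ j ∈ Finset.range (K + 1), |(y ^ j).coeff u| * (|c| ^ j)⁻¹, K,
    Finset.sum_nonneg fun j _ => mul_nonneg (abs_nonneg _)
      (inv_nonneg.2 (pow_nonneg (abs_nonneg _) _)), ?_⟩
  intro n hn
  have hn1 : 1 ≤ n := by omega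
  rw [hcoeff n]
  set f : ℕ → ℝ := fun k => (n.choose k : ℝ) * (c ^ k * (y ^ (n - k)).coeff u) with hf
  have himg : Finset.image (fun j => n - j) (Finset.range (K + 1)) ⊆ Finset.range (n + 1) := by
    intro k hk
    simp only [Finset.mem_image, Finset.mem_range] at *
    omega
  have hstep1 : ∑ k ∈ Finset.range (n + 1), f k
      = ∑ k ∈ Finset.image (fun j => n - j) (Finset.range (K + 1)), f k := by
    refine (Finset.sum_subset himg ?_).symm
    intro k hk hnk
    simp only [Finset.mem_image, Finset.mem_range] at hk hnk
    have hYk : (y ^ (n - k)).coeff u = 0 := by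
      refine hK _ ?_
      by_contra hc2
      push_neg at hc2
      exact hnk ⟨n - k, by omega, by omega⟩
    rw [hf]; simp [hYk]
  have hstep2 : ∑ k ∈ Finset.image (fun j => n - j) (Finset.range (K + 1)), f k
      = ∑ j ∈ Finset.range (K + 1), f (n - j) := by
    refine Finset.sum_image ?_
    intro j1 h1 j2 h2 he
    simp only [Finset.mem_coe, Finset.mem_range] at h1 h2 he
    omega
  rw [hstep1, hstep2]
  refine (Finset.abs_sum_le_sum_abs _ _).trans ?_
  rw [Finset.sum_mul, Finset.sum_mul]
  refine Finset.sum_le_sum fun j hj => ?_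
  simp only [Finset.mem_range] at hj
  have hjn : j ≤ n := by omega
  have hnnj : n - (n - j) = j := by omega
  rw [hf]
  simp only [abs_mul, hnnj]
  have hch : (n.choose (n - j) : ℝ) ≤ (n : ℝ) ^ K := by
    rw [Nat.choose_symm hjn]
    calc (n.choose j : ℝ) ≤ ((n ^ j : ℕ) : ℝ) := by exact_mod_cast Nat.choose_le_pow n j
      _ = (n : ℝ) ^ j := by push_cast; ring
      _ ≤ (n : ℝ) ^ K := by
        refine pow_le_pow_right₀ ?_ (by omega)
        exact_mod_cast hn1
  have hpow : |c ^ (n - j)| ≤ (|c| ^ j)⁻¹ * |c| ^ n := by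
    rw [abs_pow]
    by_cases hc0 : c = 0
    · rw [hc0, abs_zero]
      rw [zero_pow (show n - j ≠ 0 by omega), zero_pow (show n ≠ 0 by omega), mul_zero]
    · have hac : (0:ℝ) < |c| := abs_pos.2 hc0
      exact le_of_eq (by rw [pow_sub₀ _ (ne_of_gt hac) hjn]; ring)
  have habs : |(n.choose (n - j) : ℝ)| = (n.choose (n - j) : ℝ) := abs_of_nonneg (by positivity)
  rw [habs]
  calc (n.choose (n - j) : ℝ) * (|c ^ (n - j)| * |(y ^ j).coeff u|)
      ≤ (n : ℝ) ^ K * (((|c| ^ j)⁻¹ * |c| ^ n) * |(y ^ j).coeff u|) := by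
        refine mul_le_mul hch ?_ (by positivity) (by positivity)
        exact mul_le_mul_of_nonneg_right hpow (abs_nonneg _)
    _ = |(y ^ j).coeff u| * (|c| ^ j)⁻¹ * (n : ℝ) ^ K * |c| ^ n := by ring

lemma tendsto_root_aux {C : ℝ} (hC : 0 < C) (K : ℕ) {ρ : ℝ} (hρ : 0 < ρ) :
    Tendsto (fun n : ℕ => (C * (n : ℝ) ^ K * ρ ^ n) ^ ((n : ℝ)⁻¹)) atTop (𝓝 ρ) := by
  have hlog : Tendsto (fun n : ℕ => (Real.log C) * (n : ℝ)⁻¹ + (K : ℝ) * (Real.log n * (n : ℝ)⁻¹)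
      + Real.log ρ) atTop (𝓝 (Real.log ρ)) := by
    have h1 : Tendsto (fun n : ℕ => (Real.log C) * (n : ℝ)⁻¹) atTop (𝓝 0) := by
      simpa using tendsto_inv_atTop_nhds_zero_nat.const_mul (Real.log C)
    have h2 : Tendsto (fun n : ℕ => Real.log n * (n : ℝ)⁻¹) atTop (𝓝 0) := by
      have := Real.isLittleO_log_id_atTop.tendsto_div_nhds_zero
      have h3 := this.comp (tendsto_natCast_atTop_atTop (R := ℝ))
      simpa [Function.comp_def, div_eq_mul_inv] using h3
    have h4 := (h1.add ((h2.const_mul (K : ℝ)))).add (tendsto_const_nhds (x := Real.log ρ))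
    simpa using h4
  have hev : ∀ᶠ n : ℕ in atTop, (C * (n : ℝ) ^ K * ρ ^ n) ^ ((n : ℝ)⁻¹)
      = Real.exp ((Real.log C) * (n : ℝ)⁻¹ + (K : ℝ) * (Real.log n * (n : ℝ)⁻¹) + Real.log ρ) := by
    filter_upwards [eventually_ge_atTop 1] with n hn
    have hn0 : (0:ℝ) < (n : ℝ) := by exact_mod_cast hn
    have hpos : (0:ℝ) < C * (n : ℝ) ^ K * ρ ^ n := by positivity
    rw [Real.rpow_def_of_pos hpos]
    congr 1
    rw [Real.log_mul (by positivity) (by positivity), Real.log_mul (by positivity) (by positivity),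
      Real.log_pow, Real.log_pow]
    have hinv : ((n : ℝ)) * (n:ℝ)⁻¹ = 1 := mul_inv_cancel₀ (ne_of_gt hn0)
    field_simp
  have := (Real.continuous_exp.continuousAt.tendsto.comp hlog)
  rw [Real.exp_log hρ] at this
  exact Tendsto.congr' (hev.mono fun n h => h.symm) this

lemma limsup_rpow_le {b : ℕ → ℝ} {C ρ : ℝ} {K : ℕ} (hρ : 0 ≤ ρ)
    (h : ∀ᶠ n in atTop, |b n| ≤ C * (n : ℝ) ^ K * ρ ^ n) :
    atTop.limsup (fun n => ENNReal.ofReal (|b n| ^ ((n : ℝ)⁻¹))) ≤ ENNReal.ofReal ρ := by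
  set C' := |C| + 1 with hC'
  have hC0 : 0 < C' := by positivity
  have h' : ∀ᶠ n in atTop, |b n| ≤ C' * (n : ℝ) ^ K * ρ ^ n := by
    filter_upwards [h, eventually_ge_atTop 1] with n hn hn1
    have hn0 : (0:ℝ) ≤ (n:ℝ) := by positivity
    refine hn.trans ?_
    have : C ≤ C' := by rw [hC']; cases abs_cases C <;> linarith
    apply mul_le_mul_of_nonneg_right (mul_le_mul_of_nonneg_right this (by positivity))
      (by positivity)
  rcases eq_or_lt_of_le hρ with hρ0 | hρpos
  · have hev : ∀ᶠ n in atTop, ENNReal.ofReal (|b n| ^ ((n : ℝ)⁻¹)) = 0 := by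
      filter_upwards [h', eventually_ge_atTop 1] with n hn hn1
      have hbn : |b n| = 0 := le_antisymm (by
        rw [← hρ0, zero_pow (show n ≠ 0 by omega), mul_zero] at hn; exact hn) (abs_nonneg _)
      rw [hbn, Real.zero_rpow (by positivity), ENNReal.ofReal_zero]
    have : atTop.limsup (fun n => ENNReal.ofReal (|b n| ^ ((n : ℝ)⁻¹))) =
        atTop.limsup (fun _ : ℕ => (0 : ENNReal)) := limsup_congr hev
    rw [this, limsup_const, ← hρ0, ENNReal.ofReal_zero]
  · have hle : (fun n : ℕ => ENNReal.ofReal (|b n| ^ ((n : ℝ)⁻¹))) ≤ᶠ[atTop]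
        fun n => ENNReal.ofReal ((C' * (n : ℝ) ^ K * ρ ^ n) ^ ((n : ℝ)⁻¹)) := by
      filter_upwards [h'] with n hn
      exact ENNReal.ofReal_le_ofReal
        (Real.rpow_le_rpow (abs_nonneg _) hn (by positivity))
    have htend : Tendsto (fun n : ℕ =>
        ENNReal.ofReal ((C' * (n : ℝ) ^ K * ρ ^ n) ^ ((n : ℝ)⁻¹))) atTop
        (𝓝 (ENNReal.ofReal ρ)) :=
      (ENNReal.continuous_ofReal.continuousAt.tendsto).comp (tendsto_root_aux hC0 K hρpos)
    calc atTop.limsup (fun n => ENNReal.ofReal (|b n| ^ ((n : ℝ)⁻¹)))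
        ≤ atTop.limsup (fun n : ℕ =>
            ENNReal.ofReal ((C' * (n : ℝ) ^ K * ρ ^ n) ^ ((n : ℝ)⁻¹))) :=
          limsup_le_limsup hle
      _ = ENNReal.ofReal ρ := htend.limsup_eq

lemma eventually_le_pow {b : ℕ → ℝ} {ρ : ℝ} (hρ : 0 < ρ)
    (h : atTop.limsup (fun n => ENNReal.ofReal (|b n| ^ ((n : ℝ)⁻¹))) < ENNReal.ofReal ρ) :
    ∀ᶠ n in atTop, |b n| ≤ ρ ^ n := by
  filter_upwards [eventually_lt_of_limsup_lt h, eventually_ge_atTop 1] with n hn hn1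
  have h1 : |b n| ^ ((n : ℝ)⁻¹) < ρ :=
    ((ENNReal.ofReal_lt_ofReal_iff hρ).mp hn)
  have h2 : (|b n| ^ ((n : ℝ)⁻¹)) ^ n ≤ ρ ^ n :=
    pow_le_pow_left₀ (Real.rpow_nonneg (abs_nonneg _) _) h1.le n
  rwa [Real.rpow_inv_natCast_pow (abs_nonneg _) (by omega)] at h2

lemma ennreal_le_ofReal_of_forall {a : ENNReal} {c : ℝ}
    (h : ∀ ε : ℝ, 0 < ε → a ≤ ENNReal.ofReal (c + ε)) : a ≤ ENNReal.ofReal c := by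
  refine le_of_forall_gt_imp_ge_of_dense fun d hd => ?_
  rcases eq_or_ne d ⊤ with rfl | hdt
  · exact le_top
  · have hc : c < d.toReal := by
      by_cases hc0 : 0 ≤ c
      · exact (ENNReal.ofReal_lt_iff_lt_toReal hc0 hdt).mp hd
      · push_neg at hc0
        have h0 : (0:ℝ) ≤ d.toReal := ENNReal.toReal_nonneg
        linarith
    have hε : 0 < d.toReal - c := by linarith
    have := h _ hε
    rwa [show c + (d.toReal - c) = d.toReal by ring, ENNReal.ofReal_toReal hdt] at this

end Aux

/-- Convergence criterion for power series in `(𝓕, τ_w)`: let `(a_n)` be a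
regular sequence with `limsup (−λ(a_n)/n) = 0`, let
`r = 1 / sup {limsup |a_n[q]|^{1/n} : q ∈ S}` where `S = ⋃_n supp a_n`, and let
`x ∈ 𝓕` with `λ(x) ≥ 0`.  Then `Σ a_n x^n` converges absolutely in `(𝓕, τ_w)`
if `|x[0]| < r` and diverges in `(𝓕, τ_w)` if `|x[0]| > r`. -/

theorem power_series_weak_convergence (γ : ℕ → Set ℚ) (hγ : IsFinWBPartition γ)
    (a : ℕ → F)
    (hreg : WellOrderedSet (⋃ n, (a n).support))
    (hlam : Filter.atTop.limsup
        (fun n : ℕ => if a n = 0 then (⊥ : EReal)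
          else ((-((a n).order : ℝ) / (n : ℝ) : ℝ) : EReal)) = 0)
    (x : F) (hx : x = 0 ∨ 0 ≤ x.order) :
    (ENNReal.ofReal |x.coeff 0| <
        (⨆ q ∈ ⋃ n, (a n).support,
          Filter.atTop.limsup fun n : ℕ =>
            ENNReal.ofReal (|(a n).coeff q| ^ ((n : ℝ)⁻¹)))⁻¹ →
      (∃ l : F, WeakConvTo γ
          (fun m => ∑ n ∈ Finset.range (m + 1), Fabs (a n * x ^ n)) l) ∧
      ∃ l : F, WeakConvTo γ
          (fun m => ∑ n ∈ Finset.range (m + 1), a n * x ^ n) l) ∧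
    ((⨆ q ∈ ⋃ n, (a n).support,
          Filter.atTop.limsup fun n : ℕ =>
            ENNReal.ofReal (|(a n).coeff q| ^ ((n : ℝ)⁻¹)))⁻¹ <
        ENNReal.ofReal |x.coeff 0| →
      ¬ ∃ l : F, WeakConvTo γ
          (fun m => ∑ n ∈ Finset.range (m + 1), a n * x ^ n) l) := by
  have hU : (⋃ i, γ i) = Set.univ := hγ.1.2.2
  set S := ⋃ n, (a n).support with hSdef
  have hSsub : ∀ n, (a n).support ⊆ S := fun n => Set.subset_iUnion (fun n => (a n).support) n
  have hS : S.IsPWO := (isWF_of_wellOrdered hreg).isPWO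
  have hxsupp : ∀ q ∈ x.support, 0 ≤ q := by
    rcases hx with rfl | hord
    · intro q hq
      rw [HahnSeries.support_zero] at hq
      exact absurd hq (Set.notMem_empty q)
    · intro q hq
      exact hord.trans (HahnSeries.order_le_of_coeff_ne_zero hq)
  set T := (AddSubmonoid.closure x.support : Set ℚ) with hTdef
  have hT : T.IsPWO := Set.IsPWO.addSubmonoid_closure hxsupp x.isPWO_support
  have hTnn : ∀ q ∈ T, 0 ≤ q := by
    intro q hq
    exact AddSubmonoid.closure_induction hxsupp le_rfl
      (fun u v _ _ hu hv => add_nonneg hu hv) hq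
  have hpowT : ∀ n, (x ^ n).support ⊆ T := supp_pow_subset_closure x
  have coeffmul : ∀ (n : ℕ) (q : ℚ), (a n * x ^ n).coeff q =
      ∑ p ∈ Finset.antidiagonal hS hT q, (a n).coeff p.1 * (x ^ n).coeff p.2 :=
    fun n q => mul_coeff_fixed hS hT (hSsub n) (hpowT n) q
  have hmulsupp : ∀ n : ℕ, (a n * x ^ n).support ⊆ S + T := by
    intro n q hq
    obtain ⟨u, hu, v, hv, rfl⟩ := HahnSeries.support_mul_subset hq
    exact Set.add_mem_add (hSsub n hu) (hpowT n hv)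
  set L : ℚ → ENNReal := fun q => Filter.atTop.limsup fun n : ℕ =>
    ENNReal.ofReal (|(a n).coeff q| ^ ((n : ℝ)⁻¹)) with hLdef
  set M := ⨆ q ∈ S, L q with hMdef
  constructor
  · -- convergence
    intro hlt
    have habs : ∀ q : ℚ, Summable fun n => |(a n * x ^ n).coeff q| := by
      intro q
      have hsummand : ∀ p ∈ Finset.antidiagonal hS hT q,
          Summable fun n => |(a n).coeff p.1| * |(x ^ n).coeff p.2| := by
        intro p hp
        rw [Finset.mem_antidiagonal] at hp
        obtain ⟨C, K, hC, hbound⟩ := pow_coeff_bound x hxsupp p.2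
        by_cases hc0 : x.coeff 0 = 0
        · refine Summable.of_norm_bounded_eventually (g := fun _ => (0:ℝ)) summable_zero ?_
          rw [Nat.cofinite_eq_atTop]
          filter_upwards [eventually_ge_atTop (K + 1)] with n hn
          have hb := hbound n hn
          rw [hc0, abs_zero, zero_pow (show n ≠ 0 by omega), mul_zero] at hb
          have hx0 : |(x ^ n).coeff p.2| = 0 := le_antisymm hb (abs_nonneg _)
          rw [Real.norm_eq_abs, hx0, mul_zero, abs_zero]
        · have ht : (0:ℝ) < |x.coeff 0| := abs_pos.2 hc0
          have hM1 : M < (ENNReal.ofReal |x.coeff 0|)⁻¹ :=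
            ENNReal.lt_inv_iff_lt_inv.mp hlt
          rw [← ENNReal.ofReal_inv_of_pos ht] at hM1
          obtain ⟨ρ, hρ0, hMρ, hρinv⟩ := ENNReal.lt_iff_exists_real_btwn.mp hM1
          have hρpos : 0 < ρ :=
            ENNReal.ofReal_pos.mp (lt_of_le_of_lt (zero_le : (0:ENNReal) ≤ M) hMρ)
          have hρlt : ρ < |x.coeff 0|⁻¹ :=
            (ENNReal.ofReal_lt_ofReal_iff (by positivity)).mp hρinv
          have hρt : ρ * |x.coeff 0| < 1 := by
            have := mul_lt_mul_of_pos_right hρlt ht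
            rwa [inv_mul_cancel₀ (ne_of_gt ht)] at this
          have hLs : L p.1 ≤ M := le_iSup₂ (f := fun q (_ : q ∈ S) => L q) p.1 hp.1
          have heva : ∀ᶠ n in atTop, |(a n).coeff p.1| ≤ ρ ^ n :=
            eventually_le_pow hρpos (lt_of_le_of_lt hLs hMρ)
          have hmaj : Summable fun n : ℕ => C * ((n:ℝ) ^ K * (ρ * |x.coeff 0|) ^ n) := by
            refine Summable.mul_left C ?_
            refine summable_pow_mul_geometric_of_norm_lt_one K ?_
            rw [Real.norm_eq_abs, abs_of_nonneg (by positivity)]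
            exact hρt
          refine Summable.of_norm_bounded_eventually hmaj ?_
          rw [Nat.cofinite_eq_atTop]
          filter_upwards [heva, eventually_ge_atTop (K + 1)] with n hn1 hn2
          rw [Real.norm_eq_abs, abs_of_nonneg (by positivity)]
          calc |(a n).coeff p.1| * |(x ^ n).coeff p.2|
              ≤ ρ ^ n * (C * (n:ℝ) ^ K * |x.coeff 0| ^ n) := by
                refine mul_le_mul hn1 (hbound n hn2) (abs_nonneg _) (by positivity)
            _ = C * ((n:ℝ) ^ K * (ρ * |x.coeff 0|) ^ n) := by rw [mul_pow]; ring
      have hsum : Summable fun n => ∑ p ∈ Finset.antidiagonal hS hT q,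
          |(a n).coeff p.1| * |(x ^ n).coeff p.2| := summable_sum hsummand
      refine Summable.of_nonneg_of_le (fun n => abs_nonneg _) (fun n => ?_) hsum
      rw [coeffmul n q]
      refine (Finset.abs_sum_le_sum_abs _ _).trans (le_of_eq ?_)
      exact Finset.sum_congr rfl fun p _ => abs_mul _ _
    constructor
    · refine weakConv_of_summable hγ _ (hS.add hT) (fun n => ?_) (fun q => ?_)
      · show (Fabs (a n * x ^ n)).support ⊆ S + T
        unfold Fabs
        split
        · exact hmulsupp n
        · rw [HahnSeries.support_neg]; exact hmulsupp n
      · refine Summable.of_abs ?_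
        refine ((habs q).congr fun n => ?_)
        show |(a n * x ^ n).coeff q| = |(Fabs (a n * x ^ n)).coeff q|
        unfold Fabs
        split
        · rfl
        · rw [HahnSeries.coeff_neg, abs_neg]
    · exact weakConv_of_summable hγ _ (hS.add hT) hmulsupp
        (fun q => Summable.of_abs (habs q))
  · -- divergence
    rintro hgt ⟨l, hl⟩
    have ht : (0:ℝ) < |x.coeff 0| :=
      ENNReal.ofReal_pos.mp (lt_of_le_of_lt (zero_le : (0:ENNReal) ≤ M⁻¹) hgt)
    set tt := |x.coeff 0| with httdef
    have hterm : ∀ q : ℚ, Tendsto (fun n => (a n * x ^ n).coeff q) atTop (𝓝 0) := by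
      intro q
      have h1 := coeff_tendsto_of_weakConv hγ hl hU q
      have h2 : Tendsto (fun m => ∑ n ∈ Finset.range (m + 1), (a n * x ^ n).coeff q) atTop
          (𝓝 (l.coeff q)) := h1.congr fun m => sum_coeff _ _ _
      have h3 : Tendsto (fun m => ∑ n ∈ Finset.range (m + 1 + 1), (a n * x ^ n).coeff q) atTop
          (𝓝 (l.coeff q)) := h2.comp (tendsto_add_atTop_nat 1)
      have h4 := h3.sub h2
      rw [sub_self] at h4
      have h5 : Tendsto (fun m => (a (m + 1) * x ^ (m + 1)).coeff q) atTop (𝓝 0) := by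
        refine h4.congr fun m => ?_
        rw [Finset.sum_range_succ]
        ring
      exact (tendsto_add_atTop_iff_nat 1).mp h5
    have main : ∀ s ∈ S, L s ≤ (ENNReal.ofReal tt)⁻¹ := by
      refine wellOrdered_induction hreg _ ?_
      intro s hsS IH
      rw [← ENNReal.ofReal_inv_of_pos ht]
      refine ennreal_le_ofReal_of_forall fun ε hε => ?_
      set ρ := tt⁻¹ + ε with hρdef
      have hρpos : 0 < ρ := by positivity
      have hρt1 : 1 ≤ ρ * tt := by
        rw [hρdef, add_mul, inv_mul_cancel₀ (ne_of_gt ht)]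
        nlinarith
      set D := Finset.antidiagonal hS hT s with hDdef
      have hsD : ((s, 0) : ℚ × ℚ) ∈ D :=
        Finset.mem_antidiagonal.mpr ⟨hsS, AddSubmonoid.zero_mem _, add_zero s⟩
      -- uniform eventual bound on the cross terms
      have hcross : ∀ p : ℚ × ℚ, ∃ (C : ℝ) (K : ℕ), 0 ≤ C ∧ (p ∈ D.erase (s, 0) →
          ∀ᶠ n in atTop, |(a n).coeff p.1| * |(x ^ n).coeff p.2|
            ≤ C * (n:ℝ) ^ K * (ρ * tt) ^ n) := by
        intro p
        by_cases hp : p ∈ D.erase (s, 0)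
        · have hpD := Finset.mem_of_mem_erase hp
          have hpne := Finset.ne_of_mem_erase hp
          rw [hDdef, Finset.mem_antidiagonal] at hpD
          have hp2pos : 0 < p.2 := by
            rcases lt_or_eq_of_le (hTnn p.2 hpD.2.1) with h | h
            · exact h
            · exfalso
              apply hpne
              have hp1 : p.1 = s := by
                have := hpD.2.2
                rw [← h, add_zero] at this
                exact this
              exact Prod.ext hp1 h.symm
          have hp1lt : p.1 < s := by
            have := hpD.2.2
            linarith
          have hIH := IH p.1 hpD.1 hp1lt
          have hlt2 : L p.1 < ENNReal.ofReal ρ := by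
            refine lt_of_le_of_lt hIH ?_
            rw [← ENNReal.ofReal_inv_of_pos ht]
            refine (ENNReal.ofReal_lt_ofReal_iff hρpos).mpr ?_
            rw [hρdef]
            linarith
          have heva := eventually_le_pow hρpos hlt2
          obtain ⟨C, K, hC, hbound⟩ := pow_coeff_bound x hxsupp p.2
          refine ⟨C, K, hC, fun _ => ?_⟩
          filter_upwards [heva, eventually_ge_atTop (K + 1)] with n hn1 hn2
          calc |(a n).coeff p.1| * |(x ^ n).coeff p.2|
              ≤ ρ ^ n * (C * (n:ℝ) ^ K * tt ^ n) := by
                refine mul_le_mul hn1 (hbound n hn2) (abs_nonneg _) (by positivity)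
            _ = C * (n:ℝ) ^ K * (ρ * tt) ^ n := by rw [mul_pow]; ring
        · exact ⟨0, 0, le_rfl, fun h => absurd h hp⟩
      choose Cf Kf hCf hboundf using hcross
      set C : ℝ := ∑ p ∈ D.erase (s, 0), Cf p with hCdef
      set K : ℕ := (D.erase (s, 0)).sup Kf with hKdef
      have hC0 : 0 ≤ C := Finset.sum_nonneg fun p _ => hCf p
      have hcross2 : ∀ᶠ n in atTop,
          ∑ p ∈ D.erase (s, 0), |(a n).coeff p.1| * |(x ^ n).coeff p.2|
            ≤ C * (n:ℝ) ^ K * (ρ * tt) ^ n := by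
        have hall := (Finset.eventually_all (D.erase (s, 0))).2
          fun p hp => hboundf p hp
        filter_upwards [hall, eventually_ge_atTop 1] with n hn hn1
        have hnn1 : (1:ℝ) ≤ (n:ℝ) := by exact_mod_cast hn1
        calc ∑ p ∈ D.erase (s, 0), |(a n).coeff p.1| * |(x ^ n).coeff p.2|
            ≤ ∑ p ∈ D.erase (s, 0), Cf p * (n:ℝ) ^ K * (ρ * tt) ^ n := by
              refine Finset.sum_le_sum fun p hp => ?_
              refine (hn p hp).trans ?_
              have hKle : Kf p ≤ K := Finset.le_sup hp
              have : (n:ℝ) ^ Kf p ≤ (n:ℝ) ^ K := pow_le_pow_right₀ hnn1 hKle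
              have h0 : (0:ℝ) ≤ (ρ * tt) ^ n := by positivity
              calc Cf p * (n:ℝ) ^ Kf p * (ρ * tt) ^ n
                  ≤ Cf p * (n:ℝ) ^ K * (ρ * tt) ^ n := by
                    refine mul_le_mul_of_nonneg_right ?_ h0
                    exact mul_le_mul_of_nonneg_left this (hCf p)
                _ = Cf p * (n:ℝ) ^ K * (ρ * tt) ^ n := rfl
          _ = C * (n:ℝ) ^ K * (ρ * tt) ^ n := by
              rw [hCdef, Finset.sum_mul, Finset.sum_mul]
      have hterm1 : ∀ᶠ n in atTop, |(a n * x ^ n).coeff s| ≤ 1 := by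
        obtain ⟨N, hN⟩ := Metric.tendsto_atTop.mp (hterm s) 1 one_pos
        rw [eventually_atTop]
        refine ⟨N, fun n hn => ?_⟩
        have := hN n hn
        rw [Real.dist_eq, sub_zero] at this
        exact this.le
      have hfinal : ∀ᶠ n in atTop, |(a n).coeff s| ≤ (1 + C) * (n:ℝ) ^ K * ρ ^ n := by
        filter_upwards [hterm1, hcross2, eventually_ge_atTop 1] with n h1 h2 hn1
        have hnn1 : (1:ℝ) ≤ (n:ℝ) := by exact_mod_cast hn1
        have hid : (a n * x ^ n).coeff s = (a n).coeff s * (x.coeff 0) ^ n +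
            ∑ p ∈ D.erase (s, 0), (a n).coeff p.1 * (x ^ n).coeff p.2 := by
          rw [coeffmul n s, ← Finset.add_sum_erase _ _ hsD]
          congr 1
          show (a n).coeff s * (x ^ n).coeff 0 = _
          rw [pow_coeff_zero hxsupp n]
        have hsplit : |(a n).coeff s * (x.coeff 0) ^ n| ≤ 1 + C * (n:ℝ) ^ K * (ρ * tt) ^ n := by
          have heq : (a n).coeff s * (x.coeff 0) ^ n = (a n * x ^ n).coeff s -
              ∑ p ∈ D.erase (s, 0), (a n).coeff p.1 * (x ^ n).coeff p.2 := by
            rw [hid]; ring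
          rw [heq]
          refine (abs_sub _ _).trans ?_
          refine add_le_add h1 ?_
          refine (Finset.abs_sum_le_sum_abs _ _).trans ?_
          refine le_trans (le_of_eq ?_) h2
          exact Finset.sum_congr rfl fun p _ => abs_mul _ _
        have hXge1 : (1:ℝ) ≤ (n:ℝ) ^ K * (ρ * tt) ^ n := by
          have h3 : (1:ℝ) ≤ (n:ℝ) ^ K := one_le_pow₀ hnn1
          have h4 : (1:ℝ) ≤ (ρ * tt) ^ n := one_le_pow₀ hρt1
          nlinarith
        have hest : |(a n).coeff s| * tt ^ n ≤ ((1 + C) * (n:ℝ) ^ K * ρ ^ n) * tt ^ n := by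
          have hlhs : |(a n).coeff s| * tt ^ n = |(a n).coeff s * (x.coeff 0) ^ n| := by
            rw [abs_mul, abs_pow, httdef]
          rw [hlhs]
          refine hsplit.trans ?_
          have hrw : ((1 + C) * (n:ℝ) ^ K * ρ ^ n) * tt ^ n
              = (1 + C) * ((n:ℝ) ^ K * (ρ * tt) ^ n) := by
            rw [mul_pow]; ring
          rw [hrw]
          nlinarith
        exact le_of_mul_le_mul_right hest (pow_pos ht n)
      exact limsup_rpow_le (le_of_lt hρpos) hfinal
    have hMle : M ≤ (ENNReal.ofReal tt)⁻¹ := by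
      rw [hMdef]
      exact iSup₂_le fun q hq => main q hq
    have hcontra : ENNReal.ofReal tt ≤ M⁻¹ := by
      rw [show ENNReal.ofReal tt = ((ENNReal.ofReal tt)⁻¹)⁻¹ from (inv_inv _).symm]
      exact ENNReal.inv_le_inv.mpr hMle
    exact absurd hgt (not_lt.2 hcontra)
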